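/- Fix p ∈ ℝ. Suppose the weighted p-power mean satisfies the anti-Pigou–Dalton transfer principle universally: for every positive integer g, every weight vector w on Fin g with 0 < w i for all i, and all strictly positive S, S' : Fin g → ℝ such that, writing μ = ∑ i, w i * S i, one has μ = ∑ i, w i * S' i and |μ − S' i| ≤ |μ − S i| for all i, it holds that M_p(S'; w) ≤ M_p(S; w). Then p ≥ 1. -/

import Mathlib

open scoped BigOperators

/-- The weighted power mean `M_p(S; w)`. For `p ≠ 0` it is
`(∑ i, w i * (S i)^p)^(1/p)`; for `p = 0` it is `exp (∑ i, w i * log (S i))`. -/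
noncomputable def pmean (g : ℕ) (p : ℝ) (w S : Fin g → ℝ) : ℝ :=
  if p = 0 then Real.exp (∑ i, w i * Real.log (S i))
  else (∑ i, w i * S i ^ p) ^ (1 / p)

/-- If the weighted `p`-power mean satisfies the anti-Pigou–Dalton transfer principle
(for all group counts, positive weight vectors, and strictly positive sentiment vectors),
then `p ≥ 1`. -/
theorem anti_pigou_dalton_implies_one_le_p (p : ℝ)
    (hAPD : ∀ (g : ℕ), 0 < g → ∀ w : Fin g → ℝ, (∀ i, 0 < w i) → ∑ i, w i = 1 →
      ∀ S S' : Fin g → ℝ, (∀ i, 0 < S i) → (∀ i, 0 < S' i) →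
        (∑ i, w i * S i = ∑ i, w i * S' i) →
        (∀ i, |(∑ j, w j * S j) - S' i| ≤ |(∑ j, w j * S j) - S i|) →
        pmean g p w S' ≤ pmean g p w S) :
    1 ≤ p := by
  by_contra h
  push_neg at h
  set w : Fin 2 → ℝ := fun _ => (2:ℝ)⁻¹ with hw
  have hwpos : ∀ i : Fin 2, 0 < w i := fun i => by norm_num [hw]
  have hwsum : ∑ i, w i = 1 := by simp [hw, Fin.sum_univ_two]
  rcases lt_trichotomy p 0 with hp | hp | hp
  · -- p < 0 : use S = (t, 4 - t) with t = 2 ^ (1/p)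
    have hpne : p ≠ 0 := ne_of_lt hp
    set t : ℝ := (2:ℝ) ^ (1/p) with ht
    have htpos : 0 < t := Real.rpow_pos_of_pos (by norm_num) _
    have ht1 : t < 1 := by
      have h2 : (2:ℝ) ^ (1/p) < 2 ^ (0:ℝ) :=
        (Real.rpow_lt_rpow_left_iff (by norm_num)).2
          (by rw [one_div]; exact inv_neg''.2 hp)
      simpa [ht, one_div] using h2
    set S : Fin 2 → ℝ := ![t, 4 - t] with hS
    set S' : Fin 2 → ℝ := ![2, 2] with hS'
    have hSpos : ∀ i, 0 < S i := by
      intro i; fin_cases i <;> simp [hS] <;> linarith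
    have hS'pos : ∀ i, 0 < S' i := by intro i; fin_cases i <;> norm_num [hS']
    have hmean : ∑ i, w i * S i = 2 := by
      simp [hS, hw, Fin.sum_univ_two]; ring
    have hmean' : ∑ i, w i * S' i = 2 := by
      simp [hS', hw, Fin.sum_univ_two]; norm_num
    have habs : ∀ i : Fin 2, |(∑ j, w j * S j) - S' i| ≤ |(∑ j, w j * S j) - S i| := by
      intro i; rw [hmean]; fin_cases i <;> simp [hS, hS'] <;> positivity
    have hkey := hAPD 2 (by norm_num) w hwpos hwsum S S' hSpos hS'pos
      (by rw [hmean, hmean']) habs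
    have htp : t ^ p = 2 := by
      rw [ht, ← Real.rpow_mul (by norm_num : (0:ℝ) ≤ 2), one_div,
        inv_mul_cancel₀ hpne, Real.rpow_one]
    have h2p : ((2:ℝ) ^ p) ^ (1/p) = 2 := by
      rw [← Real.rpow_mul (by norm_num : (0:ℝ) ≤ 2), mul_one_div,
        div_self hpne, Real.rpow_one]
    have hpm' : pmean 2 p w S' = 2 := by
      rw [pmean, if_neg hpne]
      have : ∑ i, w i * S' i ^ p = (2:ℝ) ^ p := by
        simp [hS', hw, Fin.sum_univ_two]; ring
      rw [this, h2p]
    have hsum : ∑ i, w i * S i ^ p = 1 + (4 - t) ^ p / 2 := by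
      simp [hS, hw, Fin.sum_univ_two, htp]; ring
    have h4t : 0 < (4 - t) ^ p := Real.rpow_pos_of_pos (by linarith) _
    have hlt : pmean 2 p w S < 1 := by
      rw [pmean, if_neg hpne, hsum]
      calc (1 + (4 - t) ^ p / 2) ^ (1/p) < 1 ^ (1/p) :=
            Real.rpow_lt_rpow_of_neg one_pos (by linarith)
              (by rw [one_div]; exact inv_neg''.2 hp)
        _ = 1 := Real.one_rpow _
    rw [hpm'] at hkey
    linarith
  · -- p = 0
    set S : Fin 2 → ℝ := ![1, 3] with hS
    set S' : Fin 2 → ℝ := ![2, 2] with hS'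
    have hSpos : ∀ i, 0 < S i := by intro i; fin_cases i <;> norm_num [hS]
    have hS'pos : ∀ i, 0 < S' i := by intro i; fin_cases i <;> norm_num [hS']
    have hmean : ∑ i, w i * S i = 2 := by
      simp [hS, hw, Fin.sum_univ_two]; norm_num
    have hmean' : ∑ i, w i * S' i = 2 := by
      simp [hS', hw, Fin.sum_univ_two]; norm_num
    have habs : ∀ i : Fin 2, |(∑ j, w j * S j) - S' i| ≤ |(∑ j, w j * S j) - S i| := by
      intro i; rw [hmean]; fin_cases i <;> simp [hS, hS'] <;> norm_num
    have hkey := hAPD 2 (by norm_num) w hwpos hwsum S S' hSpos hS'pos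
      (by rw [hmean, hmean']) habs
    have hpm' : pmean 2 0 w S' = 2 := by
      rw [pmean, if_pos rfl]
      have : ∑ i, w i * Real.log (S' i) = Real.log 2 := by
        simp [hS', hw, Fin.sum_univ_two]; ring
      rw [this, Real.exp_log (by norm_num)]
    have hpm : pmean 2 0 w S = (3:ℝ) ^ ((2:ℝ)⁻¹) := by
      rw [pmean, if_pos rfl]
      have : ∑ i, w i * Real.log (S i) = Real.log 3 * (2:ℝ)⁻¹ := by
        simp [hS, hw, Fin.sum_univ_two]; ring
      rw [this, ← Real.rpow_def_of_pos (by norm_num)]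
    have hlt : (3:ℝ) ^ ((2:ℝ)⁻¹) < 2 := by
      have h4 : ((4:ℝ)) ^ ((2:ℝ)⁻¹) = 2 := by
        have : (4:ℝ) = (2:ℝ) ^ (2:ℝ) := by
          rw [show (2:ℝ) = ((2:ℕ):ℝ) by norm_num, Real.rpow_natCast]; norm_num
        rw [this, ← Real.rpow_mul (by norm_num)]
        norm_num
      calc (3:ℝ) ^ ((2:ℝ)⁻¹) < (4:ℝ) ^ ((2:ℝ)⁻¹) :=
            Real.rpow_lt_rpow (by norm_num) (by norm_num) (by norm_num)
        _ = 2 := h4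
    rw [hp] at hkey
    rw [hpm', hpm] at hkey
    linarith
  · -- 0 < p < 1
    have hpne : p ≠ 0 := ne_of_gt hp
    set S : Fin 2 → ℝ := ![1, 3] with hS
    set S' : Fin 2 → ℝ := ![2, 2] with hS'
    have hSpos : ∀ i, 0 < S i := by intro i; fin_cases i <;> norm_num [hS]
    have hS'pos : ∀ i, 0 < S' i := by intro i; fin_cases i <;> norm_num [hS']
    have hmean : ∑ i, w i * S i = 2 := by
      simp [hS, hw, Fin.sum_univ_two]; norm_num
    have hmean' : ∑ i, w i * S' i = 2 := by
      simp [hS', hw, Fin.sum_univ_two]; norm_num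
    have habs : ∀ i : Fin 2, |(∑ j, w j * S j) - S' i| ≤ |(∑ j, w j * S j) - S i| := by
      intro i; rw [hmean]; fin_cases i <;> simp [hS, hS'] <;> norm_num
    have hkey := hAPD 2 (by norm_num) w hwpos hwsum S S' hSpos hS'pos
      (by rw [hmean, hmean']) habs
    have h2p : ((2:ℝ) ^ p) ^ (1/p) = 2 := by
      rw [← Real.rpow_mul (by norm_num : (0:ℝ) ≤ 2), mul_one_div,
        div_self hpne, Real.rpow_one]
    have hpm' : pmean 2 p w S' = 2 := by
      rw [pmean, if_neg hpne]
      have : ∑ i, w i * S' i ^ p = (2:ℝ) ^ p := by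
        simp [hS', hw, Fin.sum_univ_two]; ring
      rw [this, h2p]
    -- strict concavity: (1/2)•1^p + (1/2)•3^p < 2^p
    have hconc := (Real.strictConcaveOn_rpow hp h).2
      (Set.mem_Ici.2 (by norm_num : (0:ℝ) ≤ 1))
      (Set.mem_Ici.2 (by norm_num : (0:ℝ) ≤ 3))
      (by norm_num) (by norm_num : (0:ℝ) < 2⁻¹) (by norm_num : (0:ℝ) < 2⁻¹)
      (by norm_num)
    simp only [smul_eq_mul] at hconc
    have hsumlt : ∑ i, w i * S i ^ p < (2:ℝ) ^ p := by
      have : ∑ i, w i * S i ^ p = 2⁻¹ * (1:ℝ) ^ p + 2⁻¹ * (3:ℝ) ^ p := by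
        simp [hS, hw, Fin.sum_univ_two]
      rw [this]
      refine lt_of_lt_of_eq hconc ?_
      norm_num
    have hlt : pmean 2 p w S < 2 := by
      rw [pmean, if_neg hpne, ← h2p]
      apply Real.rpow_lt_rpow _ hsumlt (by positivity)
      have : ∀ i : Fin 2, 0 ≤ w i * S i ^ p := by
        intro i
        have := (hSpos i).le
        positivity
      exact Finset.sum_nonneg fun i _ => this i
    rw [hpm'] at hkey
    linarith
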